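/- (Kleinman's lemma) Let N ≥ 1 be an integer, F ∈ ℝ^{n×n}, G ∈ ℝ^{n×p}, with rank [G FG ⋯ F^{N-1}G] = n. Then the matrix H = F - G G^T F^{(N-1)T} (Σ_{ℓ=0}^{N-1} F^ℓ G G^T F^{ℓT})^{-1} F^N is Schur, i.e., all eigenvalues of H lie in the open unit disc. -/

import Mathlib

open Matrix Finset

section Aux
variable {a b c : Type*}

private lemma cmap_mul [Fintype b] (X : Matrix a b ℝ) (Y : Matrix b c ℝ) :
    (X * Y).map Complex.ofReal = X.map Complex.ofReal * Y.map Complex.ofReal :=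
  Matrix.map_mul (f := Complex.ofRealHom)

private lemma cmap_transpose (X : Matrix a b ℝ) :
    Xᵀ.map Complex.ofReal = (X.map Complex.ofReal)ᵀ := Matrix.transpose_map

private lemma cmap_one [Fintype a] [DecidableEq a] :
    (1 : Matrix a a ℝ).map Complex.ofReal = 1 :=
  map_one Complex.ofRealHom.mapMatrix

private lemma cmap_pow [Fintype a] [DecidableEq a] (X : Matrix a a ℝ) (k : ℕ) :
    (X ^ k).map Complex.ofReal = (X.map Complex.ofReal) ^ k :=
  map_pow Complex.ofRealHom.mapMatrix X k

private lemma cmap_sub (X Y : Matrix a b ℝ) :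
    (X - Y).map Complex.ofReal = X.map Complex.ofReal - Y.map Complex.ofReal := by
  ext i j; simp [Matrix.map_apply]

private lemma cmap_sum (s : Finset ℕ) (X : ℕ → Matrix a b ℝ) :
    (∑ ℓ ∈ s, X ℓ).map Complex.ofReal = ∑ ℓ ∈ s, (X ℓ).map Complex.ofReal := by
  ext i j
  simp only [Matrix.map_apply, Matrix.sum_apply, Finset.sum_apply, Complex.ofReal_sum]

private lemma cmap_conjTranspose (X : Matrix a b ℝ) :
    (X.map Complex.ofReal)ᴴ = Xᵀ.map Complex.ofReal := by
  ext i j; simp [Matrix.conjTranspose_apply, Matrix.map_apply, Complex.conj_ofReal]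

private lemma sum_mulVec' [Fintype b] (s : Finset ℕ) (M : ℕ → Matrix a b ℂ) (x : b → ℂ) :
    (∑ ℓ ∈ s, M ℓ) *ᵥ x = ∑ ℓ ∈ s, M ℓ *ᵥ x := by
  ext i
  simp only [Matrix.mulVec, dotProduct, Finset.sum_apply, Matrix.sum_apply,
    Finset.sum_mul]
  rw [Finset.sum_comm]

private lemma dotProduct_sum' [Fintype b] (s : Finset ℕ) (x : b → ℂ) (y : ℕ → b → ℂ) :
    x ⬝ᵥ (∑ ℓ ∈ s, y ℓ) = ∑ ℓ ∈ s, x ⬝ᵥ y ℓ := by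
  simp [dotProduct, Finset.mul_sum, Finset.sum_apply]
  rw [Finset.sum_comm]

end Aux

/-- A real square matrix is Schur if all its complex eigenvalues lie in the
open unit disc. -/
def IsSchur {N : Type*} [Fintype N] [DecidableEq N] (M : Matrix N N ℝ) : Prop :=
  ∀ z ∈ spectrum ℂ (M.map Complex.ofReal), ‖z‖ < 1

set_option maxHeartbeats 1000000 in
/-- Kleinman's lemma: if the controllability matrix `[G FG ⋯ F^{N-1}G]` has
full row rank `n`, then
`H = F - G Gᵀ (Fᵀ)^{N-1} (Σ_{ℓ<N} F^ℓ G Gᵀ (Fᵀ)^ℓ)⁻¹ F^N` is Schur. -/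
theorem kleinman (n p N : ℕ) (hN : 1 ≤ N)
    (F : Matrix (Fin n) (Fin n) ℝ) (G : Matrix (Fin n) (Fin p) ℝ)
    (hrank :
      (Matrix.of fun (i : Fin n) (lj : Fin N × Fin p) =>
        (F ^ (lj.1 : ℕ) * G) i lj.2).rank = n) :
    IsSchur (F - G * Gᵀ * (Fᵀ) ^ (N - 1) *
      (∑ ℓ ∈ Finset.range N, F ^ ℓ * G * Gᵀ * (Fᵀ) ^ ℓ)⁻¹ * F ^ N) := by
  obtain ⟨M, rfl⟩ : ∃ M, N = M + 1 := ⟨N - 1, (Nat.succ_pred_eq_of_pos hN).symm⟩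
  intro z hz
  by_contra habs
  push_neg at habs
  have hs1 : (1 : ℝ) ≤ Complex.normSq z := by
    rw [Complex.normSq_eq_norm_sq]
    nlinarith [habs]
  have hz0 : z ≠ 0 := by
    intro h; rw [h] at hs1; simp at hs1; linarith
  -- the real Gramian
  set W : Matrix (Fin n) (Fin n) ℝ :=
    ∑ ℓ ∈ Finset.range (M + 1), F ^ ℓ * G * Gᵀ * (Fᵀ) ^ ℓ with hWdef
  set C : Matrix (Fin n) (Fin (M + 1) × Fin p) ℝ :=
    Matrix.of fun (i : Fin n) (lj : Fin (M + 1) × Fin p) =>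
      (F ^ (lj.1 : ℕ) * G) i lj.2 with hCdef
  have hterm : ∀ ℓ : ℕ, F ^ ℓ * G * Gᵀ * (Fᵀ) ^ ℓ = (F ^ ℓ * G) * (F ^ ℓ * G)ᵀ := by
    intro ℓ
    rw [Matrix.transpose_mul, Matrix.transpose_pow, Matrix.mul_assoc]
  have hWC : W = C * Cᵀ := by
    ext i k
    have hR : (C * Cᵀ) i k =
        ∑ lj : Fin (M + 1) × Fin p, (F ^ (lj.1 : ℕ) * G) i lj.2 * (F ^ (lj.1 : ℕ) * G) k lj.2 := by
      simp [Matrix.mul_apply, hCdef]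
    rw [hR, Fintype.sum_prod_type]
    rw [hWdef, Matrix.sum_apply]
    rw [← Fin.sum_univ_eq_sum_range (fun ℓ => (F ^ ℓ * G * Gᵀ * (Fᵀ) ^ ℓ) i k) (M + 1)]
    refine Finset.sum_congr rfl fun ℓ _ => ?_
    rw [hterm]
    simp [Matrix.mul_apply, ← Matrix.transpose_pow, mul_comm]
  have hWrank : W.rank = n := by
    rw [hWC, Matrix.rank_self_mul_transpose]; exact hrank
  have hWu : IsUnit W := by
    rw [← Matrix.mulVec_surjective_iff_isUnit]
    have hr : LinearMap.range W.mulVecLin = ⊤ := by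
      apply Submodule.eq_top_of_finrank_eq
      rw [show Module.finrank ℝ (LinearMap.range W.mulVecLin) = W.rank from rfl, hWrank,
        Module.finrank_fintype_fun_eq_card, Fintype.card_fin]
    intro x
    obtain ⟨y, hy⟩ := LinearMap.range_eq_top.mp hr x
    exact ⟨y, hy⟩
  have hdetWu : IsUnit W.det := (Matrix.isUnit_iff_isUnit_det W).mp hWu
  have hWV : W * W⁻¹ = 1 := Matrix.mul_nonsing_inv W hdetWu
  have hVW : W⁻¹ * W = 1 := Matrix.nonsing_inv_mul W hdetWu
  -- complexifications
  set Ac : Matrix (Fin n) (Fin n) ℂ := F.map Complex.ofReal with hAc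
  set Bc : Matrix (Fin n) (Fin p) ℂ := G.map Complex.ofReal with hBc
  set Vc : Matrix (Fin n) (Fin n) ℂ := (W⁻¹).map Complex.ofReal with hVc
  set Wc : Matrix (Fin n) (Fin n) ℂ := W.map Complex.ofReal with hWc
  have hblock : ∀ ℓ : ℕ, Bcᵀ * (Acᵀ) ^ ℓ = (Gᵀ * (Fᵀ) ^ ℓ).map Complex.ofReal := by
    intro ℓ
    rw [cmap_mul, cmap_pow, cmap_transpose, cmap_transpose]
  have hblockH : ∀ ℓ : ℕ, (Bcᵀ * (Acᵀ) ^ ℓ)ᴴ = Ac ^ ℓ * Bc := by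
    intro ℓ
    rw [hblock, cmap_conjTranspose, Matrix.transpose_mul, Matrix.transpose_pow,
      Matrix.transpose_transpose, Matrix.transpose_transpose, cmap_mul, cmap_pow]
  have hWcs : Wc = ∑ ℓ ∈ Finset.range (M + 1), Ac ^ ℓ * Bc * (Bcᵀ * (Acᵀ) ^ ℓ) := by
    rw [hWc, hWdef, cmap_sum]
    refine Finset.sum_congr rfl fun ℓ _ => ?_
    rw [cmap_mul, cmap_mul, cmap_mul, cmap_pow, cmap_pow, cmap_transpose, cmap_transpose,
      Matrix.mul_assoc]
  have hWVc : Wc * Vc = 1 := by rw [hWc, hVc, ← cmap_mul, hWV, cmap_one]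
  -- the complexified closed-loop matrix
  have hHc : (F - G * Gᵀ * (Fᵀ) ^ (M + 1 - 1) * W⁻¹ * F ^ (M + 1)).map Complex.ofReal
      = Ac - Bc * (Bcᵀ * (Acᵀ) ^ M) * (Vc * Ac ^ (M + 1)) := by
    rw [cmap_sub, cmap_mul, cmap_mul, cmap_mul, cmap_mul, cmap_pow, cmap_pow, cmap_transpose,
      cmap_transpose]
    simp only [Nat.add_sub_cancel]
    congr 1
    simp only [Matrix.mul_assoc]
    rfl
  -- extract an eigenvector
  rw [spectrum.mem_iff] at hz
  have hdet : (algebraMap ℂ (Matrix (Fin n) (Fin n) ℂ) z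
      - (F - G * Gᵀ * (Fᵀ) ^ (M + 1 - 1) * W⁻¹ * F ^ (M + 1)).map Complex.ofReal).det = 0 := by
    by_contra hne
    exact hz ((Matrix.isUnit_iff_isUnit_det _).mpr (isUnit_iff_ne_zero.mpr hne))
  obtain ⟨v, hvne, hv⟩ := Matrix.exists_mulVec_eq_zero_iff.mpr hdet
  have heig : (Ac - Bc * (Bcᵀ * (Acᵀ) ^ M) * (Vc * Ac ^ (M + 1))) *ᵥ v = z • v := by
    rw [← hHc]
    rw [Matrix.sub_mulVec, Algebra.algebraMap_eq_smul_one, Matrix.smul_mulVec,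
      Matrix.one_mulVec, sub_eq_zero] at hv
    exact hv.symm
  -- abbreviations for the optimal-control argument
  obtain ⟨m, hm⟩ : ∃ x : Fin n → ℂ, x = Vc *ᵥ (Ac ^ (M + 1) *ᵥ v) := ⟨_, rfl⟩
  obtain ⟨g, hg⟩ : ∃ x : ℕ → Fin p → ℂ, x = fun ℓ => (Bcᵀ * (Acᵀ) ^ ℓ) *ᵥ m := ⟨_, rfl⟩
  obtain ⟨u, hu⟩ : ∃ x : ℕ → Fin p → ℂ, x = fun ℓ => if ℓ = 0 then 0 else g (ℓ - 1) := ⟨_, rfl⟩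
  obtain ⟨d, hd⟩ : ∃ x : ℕ → Fin p → ℂ, x = fun ℓ => u ℓ - z • g ℓ := ⟨_, rfl⟩
  have heig' : Ac *ᵥ v - (Bc * (Bcᵀ * (Acᵀ) ^ M)) *ᵥ m = z • v := by
    rw [← heig, Matrix.sub_mulVec]
    congr 1
    rw [hm]
    simp only [Matrix.mulVec_mulVec, Matrix.mul_assoc]
  have hWm : Wc *ᵥ m = Ac ^ (M + 1) *ᵥ v := by
    rw [hm, Matrix.mulVec_mulVec, Matrix.mulVec_mulVec, hWVc, Matrix.one_mul]
  have hK3 : ∑ ℓ ∈ Finset.range (M + 1), (Ac ^ ℓ * Bc) *ᵥ g ℓ = Ac ^ (M + 1) *ᵥ v := by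
    have h1 : ∀ ℓ : ℕ, (Ac ^ ℓ * Bc) *ᵥ g ℓ = (Ac ^ ℓ * Bc * (Bcᵀ * (Acᵀ) ^ ℓ)) *ᵥ m :=
      fun ℓ => by rw [hg]; rw [Matrix.mulVec_mulVec]
    simp only [h1]
    rw [← sum_mulVec', ← hWcs, hWm]
  have hu0 : u 0 = 0 := by simp [hu]
  have husucc : ∀ ℓ : ℕ, u (ℓ + 1) = g ℓ := by intro ℓ; simp [hu]
  have hK4 : ∑ ℓ ∈ Finset.range (M + 1), (Ac ^ ℓ * Bc) *ᵥ u ℓ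
      = z • (Ac ^ (M + 1) *ᵥ v) := by
    have hterm2 : ∀ ℓ : ℕ, (Ac ^ (ℓ + 1) * Bc) *ᵥ u (ℓ + 1)
        = (Ac * (Ac ^ ℓ * Bc * (Bcᵀ * (Acᵀ) ^ ℓ))) *ᵥ m := by
      intro ℓ
      rw [husucc, hg]
      simp only [Matrix.mulVec_mulVec]
      rw [pow_succ']
      simp only [Matrix.mul_assoc]
    rw [Finset.sum_range_succ']
    rw [hu0, Matrix.mulVec_zero, add_zero]
    simp only [hterm2]
    rw [← sum_mulVec', ← Finset.mul_sum]
    have hsplit : ∑ ℓ ∈ Finset.range M, Ac ^ ℓ * Bc * (Bcᵀ * (Acᵀ) ^ ℓ)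
        = Wc - Ac ^ M * Bc * (Bcᵀ * (Acᵀ) ^ M) := by
      rw [hWcs, Finset.sum_range_succ, add_sub_cancel_right]
    rw [hsplit, mul_sub, Matrix.sub_mulVec]
    have h1 : (Ac * Wc) *ᵥ m = (Ac * Ac ^ (M + 1)) *ᵥ v := by
      rw [← Matrix.mulVec_mulVec, hWm, Matrix.mulVec_mulVec]
    rw [h1]
    have h2 : z • (Ac ^ (M + 1) *ᵥ v) = Ac ^ (M + 1) *ᵥ (z • v) :=
      (Matrix.mulVec_smul _ _ _).symm
    rw [h2, ← heig', Matrix.mulVec_sub]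
    have e1 : (Ac * Ac ^ (M + 1)) *ᵥ v = Ac ^ (M + 1) *ᵥ (Ac *ᵥ v) := by
      rw [Matrix.mulVec_mulVec]
      rw [show Ac * Ac ^ (M + 1) = Ac ^ (M + 1) * Ac from by rw [← pow_succ', ← pow_succ]]
    have e2 : (Ac * (Ac ^ M * Bc * (Bcᵀ * (Acᵀ) ^ M))) *ᵥ m
        = Ac ^ (M + 1) *ᵥ ((Bc * (Bcᵀ * (Acᵀ) ^ M)) *ᵥ m) := by
      rw [Matrix.mulVec_mulVec]
      rw [show Ac * (Ac ^ M * Bc * (Bcᵀ * (Acᵀ) ^ M))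
          = Ac ^ (M + 1) * (Bc * (Bcᵀ * (Acᵀ) ^ M)) from by
        rw [pow_succ']
        simp only [Matrix.mul_assoc]]
    rw [e1, e2]
  have hdsum : ∑ ℓ ∈ Finset.range (M + 1), (Ac ^ ℓ * Bc) *ᵥ d ℓ = 0 := by
    have h3 : ∀ ℓ : ℕ, (Ac ^ ℓ * Bc) *ᵥ d ℓ
        = (Ac ^ ℓ * Bc) *ᵥ u ℓ - z • ((Ac ^ ℓ * Bc) *ᵥ g ℓ) := by
      intro ℓ
      rw [hd]
      rw [Matrix.mulVec_sub, Matrix.mulVec_smul]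
    simp only [h3]
    rw [Finset.sum_sub_distrib, ← Finset.smul_sum, hK3, hK4, sub_self]
  have hcross : ∑ ℓ ∈ Finset.range (M + 1), star (z • g ℓ) ⬝ᵥ d ℓ = 0 := by
    have h1 : ∀ ℓ : ℕ, star (z • g ℓ) ⬝ᵥ d ℓ
        = star z * (star m ⬝ᵥ ((Ac ^ ℓ * Bc) *ᵥ d ℓ)) := by
      intro ℓ
      rw [hg]
      rw [star_smul, smul_dotProduct, Matrix.star_mulVec, hblockH,
        ← Matrix.dotProduct_mulVec, smul_eq_mul]
    simp only [h1]
    rw [← Finset.mul_sum, ← dotProduct_sum', hdsum, dotProduct_zero, mul_zero]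
  -- squared norms
  set Q : (Fin p → ℂ) → ℝ := fun x => ∑ j, Complex.normSq (x j) with hQ
  have hQdot : ∀ x : Fin p → ℂ, star x ⬝ᵥ x = (Q x : ℂ) := by
    intro x
    rw [hQ]
    dsimp only
    rw [Complex.ofReal_sum]
    simp [dotProduct, Complex.normSq_eq_conj_mul_self, Complex.star_def]
  have hQnn : ∀ x, 0 ≤ Q x := fun x => Finset.sum_nonneg fun j _ => Complex.normSq_nonneg _
  have hQzero : ∀ x, Q x = 0 → x = 0 := by
    intro x hx
    funext j
    have h4 := (Finset.sum_eq_zero_iff_of_nonneg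
      (fun j _ => Complex.normSq_nonneg (x j))).mp hx j (Finset.mem_univ j)
    exact Complex.normSq_eq_zero.mp h4
  have hzg : ∀ ℓ : ℕ, star (z • g ℓ) ⬝ᵥ (z • g ℓ)
      = (Complex.normSq z : ℂ) * (star (g ℓ) ⬝ᵥ g ℓ) := by
    intro ℓ
    rw [star_smul, smul_dotProduct, dotProduct_smul, smul_eq_mul, smul_eq_mul,
      ← mul_assoc, Complex.normSq_eq_conj_mul_self, Complex.star_def]
  have hterm3 : ∀ ℓ ∈ Finset.range (M + 1), (Q (u ℓ) : ℂ)
      = (Q (d ℓ) : ℂ) + (Complex.normSq z : ℂ) * (Q (g ℓ) : ℂ)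
        + (star (z • g ℓ) ⬝ᵥ d ℓ) + star (star (z • g ℓ) ⬝ᵥ d ℓ) := by
    intro ℓ _
    have hu' : u ℓ = d ℓ + z • g ℓ := by
      rw [hd]
      rw [sub_add_cancel]
    have hcr : star (d ℓ) ⬝ᵥ (z • g ℓ) = star (star (z • g ℓ) ⬝ᵥ d ℓ) := by
      rw [Matrix.star_dotProduct]
    rw [← hQdot, ← hQdot, ← hQdot, hu', star_add, add_dotProduct,
      dotProduct_add, dotProduct_add, hzg, hcr]
    ring
  have hsum_eq : (∑ ℓ ∈ Finset.range (M + 1), (Q (u ℓ) : ℂ))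
      = (∑ ℓ ∈ Finset.range (M + 1), (Q (d ℓ) : ℂ))
        + (Complex.normSq z : ℂ) * ∑ ℓ ∈ Finset.range (M + 1), (Q (g ℓ) : ℂ) := by
    rw [Finset.sum_congr rfl hterm3]
    rw [Finset.sum_add_distrib, Finset.sum_add_distrib, Finset.sum_add_distrib,
      ← Finset.mul_sum, ← star_sum, hcross]
    simp
  have hreal : ∑ ℓ ∈ Finset.range (M + 1), Q (u ℓ)
      = (∑ ℓ ∈ Finset.range (M + 1), Q (d ℓ))
        + Complex.normSq z * ∑ ℓ ∈ Finset.range (M + 1), Q (g ℓ) := by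
    exact_mod_cast hsum_eq
  have hQu : ∑ ℓ ∈ Finset.range (M + 1), Q (u ℓ)
      = ∑ ℓ ∈ Finset.range (M + 1), Q (g ℓ) - Q (g M) := by
    rw [Finset.sum_range_succ' (fun ℓ => Q (u ℓ)) M]
    simp only [husucc, hu0]
    rw [show Q 0 = 0 from by simp [hQ]]
    rw [add_zero, Finset.sum_range_succ (fun ℓ => Q (g ℓ)) M]
    ring
  -- all the defect terms vanish
  have hDnn : 0 ≤ ∑ ℓ ∈ Finset.range (M + 1), Q (d ℓ) :=
    Finset.sum_nonneg fun ℓ _ => hQnn _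
  have hTnn : 0 ≤ ∑ ℓ ∈ Finset.range (M + 1), Q (g ℓ) :=
    Finset.sum_nonneg fun ℓ _ => hQnn _
  have hD0 : ∑ ℓ ∈ Finset.range (M + 1), Q (d ℓ) = 0 := by
    have hmul : 0 ≤ (Complex.normSq z - 1) * ∑ ℓ ∈ Finset.range (M + 1), Q (g ℓ) :=
      mul_nonneg (by linarith) hTnn
    have := hQnn (g M)
    nlinarith [hreal, hQu]
  have hdzero : ∀ ℓ ∈ Finset.range (M + 1), d ℓ = 0 := by
    intro ℓ hℓ
    exact hQzero _ ((Finset.sum_eq_zero_iff_of_nonneg (fun ℓ _ => hQnn (d ℓ))).mp hD0 ℓ hℓ)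
  have hgu : ∀ ℓ ≤ M, u ℓ = z • g ℓ := by
    intro ℓ hℓ
    have := hdzero ℓ (Finset.mem_range.mpr (Nat.lt_succ_of_le hℓ))
    rw [hd] at this
    exact sub_eq_zero.mp this
  have hg0 : ∀ ℓ ≤ M, g ℓ = 0 := by
    intro ℓ
    induction ℓ with
    | zero =>
      intro _
      have h0 := hgu 0 (Nat.zero_le M)
      rw [hu0] at h0
      exact (smul_eq_zero.mp h0.symm).resolve_left hz0
    | succ k ih =>
      intro hk
      have h1 := hgu (k + 1) hk
      rw [husucc, ih (Nat.le_of_succ_le hk)] at h1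
      exact (smul_eq_zero.mp h1.symm).resolve_left hz0
  have hAv0 : Ac ^ (M + 1) *ᵥ v = 0 := by
    rw [← hK3]
    apply Finset.sum_eq_zero
    intro ℓ hℓ
    rw [hg0 ℓ (Nat.lt_succ_iff.mp (Finset.mem_range.mp hℓ)), Matrix.mulVec_zero]
  have hm0 : m = 0 := by rw [hm, hAv0, Matrix.mulVec_zero]
  have hFv : Ac *ᵥ v = z • v := by
    rw [← heig', hm0, Matrix.mulVec_zero, sub_zero]
  have hpow : ∀ k : ℕ, Ac ^ k *ᵥ v = z ^ k • v := by
    intro k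
    induction k with
    | zero => simp [Matrix.one_mulVec]
    | succ k ih =>
      rw [pow_succ, ← Matrix.mulVec_mulVec, hFv, Matrix.mulVec_smul, ih, smul_smul,
        ← pow_succ']
  have hfinal : z ^ (M + 1) • v = 0 := by rw [← hpow, hAv0]
  rcases smul_eq_zero.mp hfinal with h | h
  · exact pow_ne_zero _ hz0 h
  · exact hvne h
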